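/- Let L be a finite-dimensional Lie algebra over a field F. If I is a solregular ideal of L, then R(I) ⊆ R(L). -/

import Mathlib

namespace Paper

open LieAlgebra

section AlgDefs

variable (F : Type*) [Field F] (L : Type*) [LieRing L] [LieAlgebra F L]

/-- The nilradical of a Lie algebra: the largest nilpotent ideal (the sup of nilpotent ideals). -/
noncomputable def nilrad : LieIdeal F L :=
  sSup {I : LieIdeal F L | LieRing.IsNilpotent I}

/-- The nilpotency class of a Lie algebra. -/
noncomputable def nilClass : ℕ := sInf {k | LieModule.lowerCentralSeries F L L k = ⊥}

/-- A Lie algebra is nilregular if the field has characteristic zero, or characteristic `p > 0`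
and its nilradical has nilpotency class less than `p - 1`. -/
noncomputable def Nilregular : Prop :=
  ringChar F = 0 ∨ nilClass F (nilrad F L) < ringChar F - 1

/-- A Lie algebra is solregular if the field has characteristic zero, or characteristic `p > 0`
and its radical has derived length less than `log₂ p`. -/
noncomputable def Solregular : Prop :=
  ringChar F = 0 ∨ 2 ^ LieAlgebra.derivedLength F (LieAlgebra.radical F L) < ringChar F

/-- Regular means nilregular or solregular. -/
noncomputable def Regular : Prop := Nilregular F L ∨ Solregular F L

end AlgDefs

section IdealDefs

variable {F : Type*} [Field F] {L : Type*} [LieRing L] [LieAlgebra F L]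

/-- The centraliser `C_L(I)` of an ideal `I`, as an ideal of `L`. -/
def centralizer (I : LieIdeal F L) : LieIdeal F L where
  carrier := {x : L | ∀ y ∈ I, ⁅x, y⁆ = 0}
  zero_mem' := by intro y hy; simp
  add_mem' := by intro a b ha hb y hy; rw [add_lie, ha y hy, hb y hy, add_zero]
  smul_mem' := by intro c x hx y hy; rw [smul_lie, hx y hy, smul_zero]
  lie_mem := by
    intro x m hm y hy
    have h1 : ⁅x, ⁅m, y⁆⁆ = (0 : L) := by rw [hm y hy, lie_zero]
    have h2 : ⁅m, ⁅x, y⁆⁆ = (0 : L) := hm _ (I.lie_mem hy)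
    show ⁅⁅x, m⁆, y⁆ = (0 : L)
    rw [lie_lie, h1, h2, sub_zero]

/-- The centre `Z(I)` of an ideal `I`, as an ideal of `L`. -/
def idealCenter (I : LieIdeal F L) : LieIdeal F L where
  carrier := {x : L | x ∈ I ∧ ∀ y ∈ I, ⁅x, y⁆ = 0}
  zero_mem' := ⟨I.zero_mem, by intro y hy; simp⟩
  add_mem' := by
    intro a b ha hb
    exact ⟨I.add_mem ha.1 hb.1, fun y hy => by rw [add_lie, ha.2 y hy, hb.2 y hy, add_zero]⟩
  smul_mem' := by
    intro c x hx
    exact ⟨I.smul_mem c hx.1, fun y hy => by rw [smul_lie, hx.2 y hy, smul_zero]⟩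
  lie_mem := by
    intro x m hm
    refine ⟨I.lie_mem hm.1, fun y hy => ?_⟩
    have h1 : ⁅x, ⁅m, y⁆⁆ = (0 : L) := by rw [hm.2 y hy, lie_zero]
    have h2 : ⁅m, ⁅x, y⁆⁆ = (0 : L) := hm.2 _ (I.lie_mem hy)
    show ⁅⁅x, m⁆, y⁆ = (0 : L)
    rw [lie_lie, h1, h2, sub_zero]

/-- The centraliser `C_L(A/B)` of a chief factor, as an ideal of `L`. -/
def chiefCentralizer (A B : LieIdeal F L) : LieIdeal F L where
  carrier := {x : L | ∀ a ∈ A, ⁅x, a⁆ ∈ B}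
  zero_mem' := by intro a ha; simp [B.zero_mem]
  add_mem' := by intro x y hx hy a ha; rw [add_lie]; exact B.add_mem (hx a ha) (hy a ha)
  smul_mem' := by intro c x hx a ha; rw [smul_lie]; exact B.smul_mem c (hx a ha)
  lie_mem := by
    intro x m hm a ha
    show ⁅⁅x, m⁆, a⁆ ∈ B
    rw [lie_lie]
    exact B.sub_mem (B.lie_mem (hm a ha)) (hm _ (A.lie_mem ha))

/-- `A/Z` is a minimal ideal of `L/Z` (via the ideal correspondence). -/
def IsMinModIdeal (Z A : LieIdeal F L) : Prop :=
  Z < A ∧ ∀ B : LieIdeal F L, Z ≤ B → B ≤ A → B = Z ∨ B = A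

/-- `A` is a minimal ideal of `L`. -/
def IsMinimalIdeal (A : LieIdeal F L) : Prop := IsMinModIdeal ⊥ A

/-- An ideal `A` of `L` is quasi-minimal if `A² = A` and `A/Z(A)` is a minimal ideal
of `L/Z(A)`. -/
def IsQuasiMinimal (A : LieIdeal F L) : Prop :=
  ⁅A, A⁆ = A ∧ IsMinModIdeal (idealCenter A) A

end IdealDefs

section MoreDefs

variable (F : Type*) [Field F] (L : Type*) [LieRing L] [LieAlgebra F L]

/-- `E†(L)`: the subalgebra generated by the quasi-minimal components of `L`. -/
noncomputable def Edagger : LieSubalgebra F L :=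
  LieSubalgebra.lieSpan F L (⋃ A ∈ {A : LieIdeal F L | IsQuasiMinimal A}, (A : Set L))

/-- `N†(L) = N(L) + E†(L)`: the quasi-minimal radical of `L`. -/
noncomputable def Ndagger : LieSubalgebra F L :=
  (nilrad F L).toLieSubalgebra ⊔ Edagger F L

/-- The generalised nilradical `N*(L)`: the ideal containing `N = N(L)` with
`N*(L)/N` the sum of all minimal ideals of `L/N` contained in `(N + C_L(N))/N`. -/
noncomputable def Nstar : LieIdeal F L :=
  nilrad F L ⊔ sSup {A : LieIdeal F L | IsMinModIdeal (nilrad F L) A ∧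
    A ≤ nilrad F L ⊔ centralizer (nilrad F L)}

/-- The Frattini ideal: the largest ideal contained in every maximal subalgebra. -/
def frattini : LieIdeal F L :=
  sSup {I : LieIdeal F L | ∀ M : LieSubalgebra F L, IsCoatom M → (I : Set L) ⊆ M}

/-- `Ñ(L)`: the ideal with `Ñ(L)/φ(L) = Soc (L/φ(L))`. -/
noncomputable def Ntilde : LieIdeal F L :=
  frattini F L ⊔ sSup {A : LieIdeal F L | IsMinModIdeal (frattini F L) A}

/-- A characteristic ideal: one invariant under all derivations. -/
def IsCharIdeal (J : LieIdeal F L) : Prop :=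
  ∀ D : LieDerivation F L L, ∀ x ∈ J, D x ∈ J

/-- The characteristic radical `R_c(L)`: the sum of all solvable characteristic ideals. -/
noncomputable def charRadical : LieIdeal F L :=
  sSup {J : LieIdeal F L | LieAlgebra.IsSolvable J ∧ IsCharIdeal F L J}

/-- A subideal: a subalgebra joined to `L` by a chain of successive ideals. -/
def IsSubideal (S : LieSubalgebra F L) : Prop :=
  ∃ n : ℕ, ∃ c : Fin (n + 1) → LieSubalgebra F L,
    c 0 = S ∧ c (Fin.last n) = ⊤ ∧
    ∀ i : Fin n, c i.castSucc ≤ c i.succ ∧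
      ∀ x ∈ c i.succ, ∀ y ∈ c i.castSucc, ⁅x, y⁆ ∈ c i.castSucc

end MoreDefs

section PetravchukProof

variable {F : Type*} [Field F] {M : Type*} [LieRing M] [LieAlgebra F M]

namespace PetAux

variable (D : LieDerivation F M M) (S : LieIdeal F M)

/-- `Usub D S c B = Σ_{m ≤ B} D^m (S^{(c)})` as a submodule. -/
noncomputable def Usub (c : ℕ) : ℕ → Submodule F M
  | 0 => (derivedSeriesOfIdeal F M c S : Submodule F M)
  | B + 1 => Usub c B ⊔
      Submodule.map (D.toLinearMap ^ (B + 1)) (derivedSeriesOfIdeal F M c S : Submodule F M)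

lemma Usub_mono (c : ℕ) : Monotone (Usub D S c) :=
  monotone_nat_of_le_succ fun _ => le_sup_left

lemma pow_mem_Usub {c m B : ℕ} (h : m ≤ B) {s : M}
    (hs : s ∈ derivedSeriesOfIdeal F M c S) :
    (D.toLinearMap ^ m) s ∈ Usub D S c B := by
  induction B with
  | zero =>
    have hm : m = 0 := Nat.le_zero.mp h
    subst hm
    simpa [Usub] using hs
  | succ B ih =>
    rcases Nat.lt_or_ge m (B + 1) with h' | h'
    · exact Usub_mono D S c (Nat.le_succ B) (ih (Nat.lt_succ_iff.mp h'))
    · have hm : m = B + 1 := le_antisymm h h'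
      subst hm
      exact Submodule.mem_sup_right (Submodule.mem_map_of_mem hs)

lemma base_mem_Usub {c B : ℕ} {s : M} (hs : s ∈ derivedSeriesOfIdeal F M c S) :
    s ∈ Usub D S c B := by
  simpa using pow_mem_Usub D S (Nat.zero_le B) hs

lemma Usub_le {c B : ℕ} {P : Submodule F M}
    (h : ∀ m ≤ B, ∀ s ∈ derivedSeriesOfIdeal F M c S, (D.toLinearMap ^ m) s ∈ P) :
    Usub D S c B ≤ P := by
  induction B with
  | zero =>
    intro x hx
    simpa using h 0 le_rfl x hx
  | succ B ih =>
    refine sup_le (ih fun m hm s hs => h m (hm.trans (Nat.le_succ B)) s hs) ?_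
    exact Submodule.map_le_iff_le_comap.mpr fun s hs => h (B + 1) le_rfl s hs

lemma map_D_Usub (c B : ℕ) :
    Submodule.map D.toLinearMap (Usub D S c B) ≤ Usub D S c (B + 1) := by
  induction B with
  | zero =>
    refine Submodule.map_le_iff_le_comap.mpr fun s hs => Submodule.mem_comap.mpr ?_
    have hs' : s ∈ derivedSeriesOfIdeal F M c S := by simpa [Usub] using hs
    simpa [pow_one] using pow_mem_Usub D S (c := c) (B := 1) le_rfl hs'
  | succ B ih =>
    show Submodule.map D.toLinearMap (Usub D S c B ⊔ _) ≤ _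
    rw [Submodule.map_sup]
    refine sup_le (ih.trans (Usub_mono D S c (Nat.le_succ _))) ?_
    rw [← Submodule.map_comp]
    have hc : D.toLinearMap ∘ₗ (D.toLinearMap ^ (B + 1)) = D.toLinearMap ^ (B + 2) := by
      rw [← Module.End.mul_eq_comp, ← pow_succ']
    rw [hc]
    exact Submodule.map_le_iff_le_comap.mpr fun s hs =>
      Submodule.mem_comap.mpr (pow_mem_Usub D S le_rfl hs)

lemma D_mem_Usub {c B : ℕ} {x : M} (h : x ∈ Usub D S c B) :
    D x ∈ Usub D S c (B + 1) :=
  map_D_Usub D S c B (Submodule.mem_map_of_mem h)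

lemma lie_pow_mem (c : ℕ) :
    ∀ (i : ℕ) (y : M) ⦃s : M⦄, s ∈ derivedSeriesOfIdeal F M c S →
      ⁅y, (D.toLinearMap ^ i) s⁆ ∈ Usub D S c i := by
  intro i
  induction i with
  | zero =>
    intro y s hs
    have : ⁅y, s⁆ ∈ derivedSeriesOfIdeal F M c S :=
      (derivedSeriesOfIdeal F M c S).lie_mem hs
    simpa using base_mem_Usub D S (B := 0) this
  | succ i ih =>
    intro y s hs
    have hz : (D.toLinearMap ^ (i + 1)) s = D ((D.toLinearMap ^ i) s) := by
      rw [pow_succ']; rfl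
    rw [hz]
    set z := (D.toLinearMap ^ i) s with hzdef
    have h1 : ⁅y, D z⁆ = D ⁅y, z⁆ - ⁅D y, z⁆ := by
      have := D.apply_lie_eq_add y z
      rw [this]; abel
    rw [h1]
    exact sub_mem (D_mem_Usub D S (ih y hs)) (Usub_mono D S c (Nat.le_succ i) (ih (D y) hs))

lemma lie_Usub {c B : ℕ} (y : M) {u : M} (hu : u ∈ Usub D S c B) :
    ⁅y, u⁆ ∈ Usub D S c B := by
  have hle : Usub D S c B ≤ Submodule.comap (LieAlgebra.ad F M y) (Usub D S c B) := by
    refine Usub_le D S fun m hm s hs => ?_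
    simp only [Submodule.mem_comap, LieAlgebra.ad_apply]
    exact Usub_mono D S c hm (lie_pow_mem D S c m y hs)
  simpa [LieAlgebra.ad_apply] using hle hu

/-- `Usub` as a Lie ideal. -/
noncomputable def UIdeal (c B : ℕ) : LieIdeal F M :=
  { Usub D S c B with
    lie_mem := fun {x m} h => lie_Usub D S x h }

lemma mem_UIdeal_iff {c B : ℕ} {x : M} : x ∈ UIdeal D S c B ↔ x ∈ Usub D S c B := Iff.rfl

lemma pow_eq_iterate (m : ℕ) (x : M) : (D.toLinearMap ^ m) x = (⇑D)^[m] x := by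
  rw [Module.End.pow_apply]
  simp [LieDerivation.coeFn_coe]

/-- The key lemma: extracting the diagonal term from the iterated Leibniz rule. -/
lemma key (c i : ℕ) (hC : ((Nat.choose (2 * i) i : ℕ) : F) ≠ 0) {a b : M}
    (ha : a ∈ derivedSeriesOfIdeal F M c S) (hb : b ∈ derivedSeriesOfIdeal F M c S) :
    ⁅(D.toLinearMap ^ i) a, (D.toLinearMap ^ i) b⁆ ∈
      Usub D S (c + 1) (2 * i) ⊔ Usub D S c (i - 1) := by
  set V : Submodule F M := Usub D S (c + 1) (2 * i) ⊔ Usub D S c (i - 1) with hV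
  set v : M := ⁅(D.toLinearMap ^ i) a, (D.toLinearMap ^ i) b⁆ with hv
  have hmemrange : i ∈ Finset.range (2 * i + 1) := Finset.mem_range.mpr (by omega)
  have hleib := D.iterate_apply_lie' (2 * i) a b
  have hiter : ∀ (k l : ℕ), ⁅(⇑D)^[k] a, (⇑D)^[l] b⁆ =
      ⁅(D.toLinearMap ^ k) a, (D.toLinearMap ^ l) b⁆ := by
    intro k l; rw [pow_eq_iterate, pow_eq_iterate]
  have hsplit := (Finset.add_sum_erase _ (fun k => (2 * i).choose k •
      ⁅(⇑D)^[k] a, (⇑D)^[2 * i - k] b⁆) hmemrange).symm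
  have hmid : (2 * i).choose i • v =
      (⇑D)^[2 * i] ⁅a, b⁆ - ∑ k ∈ (Finset.range (2 * i + 1)).erase i,
        (2 * i).choose k • ⁅(⇑D)^[k] a, (⇑D)^[2 * i - k] b⁆ := by
    rw [hleib, hsplit]
    have h2i : 2 * i - i = i := by omega
    rw [h2i, hiter i i, ← hv]
    abel
  have hnsmul : (2 * i).choose i • v ∈ V := by
    rw [hmid]
    refine sub_mem ?_ (Submodule.sum_mem _ ?_)
    · have hab : ⁅a, b⁆ ∈ derivedSeriesOfIdeal F M (c + 1) S := by
        rw [derivedSeriesOfIdeal_succ]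
        exact LieSubmodule.lie_mem_lie ha hb
      have := pow_mem_Usub D S (le_refl (2 * i)) hab
      rw [pow_eq_iterate] at this
      exact Submodule.mem_sup_left this
    · intro k hk
      obtain ⟨hki, hkr⟩ := Finset.mem_erase.mp hk
      have hk2 : k ≤ 2 * i := by
        have := Finset.mem_range.mp hkr; omega
      refine nsmul_mem ?_ _
      rcases lt_or_gt_of_ne hki with h | h
      · -- k < i : junk on the `a` side, with skew-symmetry
        have h1 : ⁅(D.toLinearMap ^ (2 * i - k)) b, (D.toLinearMap ^ k) a⁆ ∈ Usub D S c k :=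
          lie_pow_mem D S c k _ ha
        have h2 : ⁅(D.toLinearMap ^ k) a, (D.toLinearMap ^ (2 * i - k)) b⁆ ∈ Usub D S c k := by
          rw [← lie_skew]; exact neg_mem h1
        rw [hiter]
        exact Submodule.mem_sup_right (Usub_mono D S c (by omega : k ≤ i - 1) h2)
      · -- k > i : junk on the `b` side
        have h1 : ⁅(D.toLinearMap ^ k) a, (D.toLinearMap ^ (2 * i - k)) b⁆ ∈
            Usub D S c (2 * i - k) := lie_pow_mem D S c _ _ hb
        rw [hiter]
        exact Submodule.mem_sup_right (Usub_mono D S c (by omega : 2 * i - k ≤ i - 1) h1)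
  have hcast : (((2 * i).choose i : ℕ) : F) • v ∈ V := by
    rw [Nat.cast_smul_eq_nsmul]; exact hnsmul
  have : v = (((2 * i).choose i : ℕ) : F)⁻¹ • ((((2 * i).choose i : ℕ) : F) • v) := by
    rw [smul_smul, inv_mul_cancel₀ hC, one_smul]
  rw [this]
  exact Submodule.smul_mem V _ hcast

lemma bracket_UIdeal_zero (c : ℕ) :
    ⁅UIdeal D S c 0, UIdeal D S c 0⁆ ≤ UIdeal D S (c + 1) 0 := by
  rw [LieSubmodule.lie_le_iff]
  intro x hx m hm
  have hx' : x ∈ derivedSeriesOfIdeal F M c S := hx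
  have hm' : m ∈ derivedSeriesOfIdeal F M c S := hm
  have hres : ⁅x, m⁆ ∈ derivedSeriesOfIdeal F M (c + 1) S := by
    rw [derivedSeriesOfIdeal_succ]
    exact LieSubmodule.lie_mem_lie hx' hm'
  exact hres

lemma bracket_UIdeal (c B : ℕ)
    (hbin : ∀ i ≤ B + 1, ((Nat.choose (2 * i) i : ℕ) : F) ≠ 0) :
    ⁅UIdeal D S c (B + 1), UIdeal D S c (B + 1)⁆ ≤
      UIdeal D S (c + 1) (2 * (B + 1)) ⊔ UIdeal D S c B := by
  rw [LieSubmodule.lie_le_iff]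
  intro x hx y hy
  set V : Submodule F M := Usub D S (c + 1) (2 * (B + 1)) ⊔ Usub D S c B with hV
  have hup : ∀ z : M, z ∈ V →
      z ∈ (UIdeal D S (c + 1) (2 * (B + 1)) ⊔ UIdeal D S c B : LieIdeal F M) := by
    intro z hz
    rw [← LieSubmodule.mem_toSubmodule, LieSubmodule.sup_toSubmodule]
    exact hz
  -- generator-generator case
  have gen : ∀ i ≤ B + 1, ∀ j ≤ B + 1, ∀ s ∈ derivedSeriesOfIdeal F M c S,
      ∀ t ∈ derivedSeriesOfIdeal F M c S,
      ⁅(D.toLinearMap ^ i) s, (D.toLinearMap ^ j) t⁆ ∈ V := by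
    intro i hi j hj s hs t ht
    rcases lt_trichotomy i j with h | h | h
    · have h1 : ⁅(D.toLinearMap ^ j) t, (D.toLinearMap ^ i) s⁆ ∈ Usub D S c i :=
        lie_pow_mem D S c i _ hs
      have h2 : ⁅(D.toLinearMap ^ i) s, (D.toLinearMap ^ j) t⁆ ∈ Usub D S c i := by
        rw [← lie_skew]; exact neg_mem h1
      exact Submodule.mem_sup_right (Usub_mono D S c (by omega : i ≤ B) h2)
    · subst h
      have hk := key D S c i (hbin i hi) hs ht
      have hle : Usub D S (c + 1) (2 * i) ⊔ Usub D S c (i - 1) ≤ V :=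
        sup_le_sup (Usub_mono D S (c + 1) (by omega)) (Usub_mono D S c (by omega))
      exact hle hk
    · exact Submodule.mem_sup_right
        (Usub_mono D S c (by omega : j ≤ B) (lie_pow_mem D S c j _ ht))
  -- x generator, y general
  have half : ∀ i ≤ B + 1, ∀ s ∈ derivedSeriesOfIdeal F M c S,
      ⁅(D.toLinearMap ^ i) s, y⁆ ∈ V := by
    intro i hi s hs
    have hle : Usub D S c (B + 1) ≤
        Submodule.comap (LieAlgebra.ad F M ((D.toLinearMap ^ i) s)) V := by
      refine Usub_le D S fun j hj t ht => Submodule.mem_comap.mpr ?_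
      rw [LieAlgebra.ad_apply]
      exact gen i hi j hj s hs t ht
    have := hle hy
    rwa [Submodule.mem_comap, LieAlgebra.ad_apply] at this
  -- fully general
  have hfull : ⁅y, x⁆ ∈ V := by
    have hle : Usub D S c (B + 1) ≤ Submodule.comap (LieAlgebra.ad F M y) V := by
      refine Usub_le D S fun i hi s hs => Submodule.mem_comap.mpr ?_
      rw [LieAlgebra.ad_apply, ← lie_skew]
      exact neg_mem (half i hi s hs)
    have := hle hx
    rwa [Submodule.mem_comap, LieAlgebra.ad_apply] at this
  have : ⁅x, y⁆ ∈ V := by rw [← lie_skew]; exact neg_mem hfull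
  exact hup _ this

/-- Solvability of a Lie ideal, phrased via the ambient derived series. -/
def solvI (K : LieIdeal F M) : Prop := ∃ n, derivedSeriesOfIdeal F M n K = ⊥

lemma solvI_bot : solvI (⊥ : LieIdeal F M) := ⟨0, rfl⟩

lemma solvI_of_bracket {K V : LieIdeal F M} (h : ⁅K, K⁆ ≤ V) (hV : solvI V) : solvI K := by
  obtain ⟨n, hn⟩ := hV
  refine ⟨n + 1, ?_⟩
  have h1 : derivedSeriesOfIdeal F M (n + 1) K =
      derivedSeriesOfIdeal F M n (derivedSeriesOfIdeal F M 1 K) :=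
    derivedSeriesOfIdeal_add K n 1
  have h2 : derivedSeriesOfIdeal F M 1 K = ⁅K, K⁆ := by
    rw [derivedSeriesOfIdeal_succ, derivedSeriesOfIdeal_zero]
  rw [h1, h2]
  exact le_bot_iff.mp (hn ▸ derivedSeriesOfIdeal_mono h n)

lemma solvI_sup {K V : LieIdeal F M} (hK : solvI K) (hV : solvI V) : solvI (K ⊔ V) := by
  obtain ⟨k, hk⟩ := hK
  obtain ⟨l, hl⟩ := hV
  refine ⟨k + l, le_bot_iff.mp ?_⟩
  have h1 : derivedSeriesOfIdeal F M (k + l) (K + V) ≤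
      derivedSeriesOfIdeal F M k K + derivedSeriesOfIdeal F M l V :=
    derivedSeriesOfIdeal_add_le_add K V k l
  have h2 : K + V = K ⊔ V := rfl
  have h3 : derivedSeriesOfIdeal F M k K + derivedSeriesOfIdeal F M l V =
      derivedSeriesOfIdeal F M k K ⊔ derivedSeriesOfIdeal F M l V := rfl
  rw [h2, h3, hk, hl, sup_bot_eq] at h1
  exact h1

lemma choose_cast_ne_zero (i : ℕ) (h : ringChar F = 0 ∨ 2 * i < ringChar F) :
    ((Nat.choose (2 * i) i : ℕ) : F) ≠ 0 := by
  have hpos : 0 < (2 * i).choose i := Nat.choose_pos (by omega)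
  rcases h with h | h
  · haveI : CharP F 0 := h ▸ ringChar.charP F
    haveI : CharZero F := CharP.charP_to_charZero F
    exact Nat.cast_ne_zero.mpr hpos.ne'
  · set p := ringChar F with hp
    haveI : CharP F p := ringChar.charP F
    have hprime : p.Prime := (CharP.char_is_prime_or_zero F p).resolve_right (by omega)
    rw [Ne, CharP.cast_eq_zero_iff F p]
    intro hdvd
    have h1 : (2 * i).choose i ∣ Nat.factorial (2 * i) := by
      have hfact := Nat.choose_mul_factorial_mul_factorial (by omega : i ≤ 2 * i)
      exact ⟨Nat.factorial i * Nat.factorial (2 * i - i), by rw [← hfact]; ring⟩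
    have h2 : p ∣ Nat.factorial (2 * i) := hdvd.trans h1
    have h3 : p ≤ 2 * i := (Nat.Prime.dvd_factorial hprime).mp h2
    omega

lemma solvI_UIdeal : ∀ e c B : ℕ, derivedSeriesOfIdeal F M (c + e) S = ⊥ →
    (ringChar F = 0 ∨ 2 ^ e * B < ringChar F) → solvI (UIdeal D S c B) := by
  intro e
  induction e with
  | zero =>
    intro c B hbot _
    have hc : derivedSeriesOfIdeal F M c S = ⊥ := by simpa using hbot
    have hU : UIdeal D S c B = ⊥ := by
      rw [eq_bot_iff]
      intro x hx
      have hle : Usub D S c B ≤ (⊥ : Submodule F M) := by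
        refine Usub_le D S fun m _ s hs => ?_
        rw [hc] at hs
        have hs0 : s = 0 := hs
        simp [hs0]
      exact hle hx
    rw [hU]
    exact solvI_bot
  | succ e ihe =>
    intro c B
    induction B with
    | zero =>
      intro hbot hch
      have h1 : derivedSeriesOfIdeal F M ((c + 1) + e) S = ⊥ := by
        rw [show (c + 1) + e = c + (e + 1) by omega]; exact hbot
      have hnext := ihe (c + 1) 0 h1 (by
        rcases hch with h | h
        · exact Or.inl h
        · right; omega)
      exact solvI_of_bracket (bracket_UIdeal_zero D S c) hnext
    | succ B ihB =>
      intro hbot hch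
      have hbin : ∀ i ≤ B + 1, ((Nat.choose (2 * i) i : ℕ) : F) ≠ 0 := by
        intro i hi
        refine choose_cast_ne_zero i ?_
        rcases hch with h | h
        · exact Or.inl h
        · right
          have h2 : 2 ≤ 2 ^ (e + 1) := by
            have := Nat.one_le_two_pow (n := e)
            calc 2 = 2 * 1 := by omega
            _ ≤ 2 * 2 ^ e := by omega
            _ = 2 ^ (e + 1) := by rw [pow_succ]; ring
          have h3 : 2 * i ≤ 2 * (B + 1) := by omega
          have h4 : 2 * (B + 1) ≤ 2 ^ (e + 1) * (B + 1) := Nat.mul_le_mul_right _ h2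
          omega
      have h1 : derivedSeriesOfIdeal F M ((c + 1) + e) S = ⊥ := by
        rw [show (c + 1) + e = c + (e + 1) by omega]; exact hbot
      have hA := ihe (c + 1) (2 * (B + 1)) h1 (by
        rcases hch with h | h
        · exact Or.inl h
        · right
          have : 2 ^ e * (2 * (B + 1)) = 2 ^ (e + 1) * (B + 1) := by
            rw [pow_succ]; ring
          omega)
      have hB' := ihB hbot (by
        rcases hch with h | h
        · exact Or.inl h
        · right
          have : 2 ^ (e + 1) * B ≤ 2 ^ (e + 1) * (B + 1) := Nat.mul_le_mul_left _ (by omega)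
          omega)
      exact solvI_of_bracket (bracket_UIdeal D S c B hbin) (solvI_sup hA hB')

end PetAux

open PetAux in
/-- Petravchuk's theorem: a derivation maps the radical into itself, provided the field has
characteristic zero or the derived length of the radical is less than `log₂ p`. -/
theorem derivation_maps_radical_to_self {F : Type*} [Field F] {M : Type*} [LieRing M]
    [LieAlgebra F M] [FiniteDimensional F M] (D : LieDerivation F M M)
    (hch : ringChar F = 0 ∨ 2 ^ derivedLength F (radical F M) < ringChar F) :
    ∀ x ∈ radical F M, D x ∈ radical F M := by
  set S := radical F M with hS
  set d := derivedLength F S with hd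
  have hsolv : IsSolvable S := inferInstance
  have hbot : derivedSeriesOfIdeal F M d S = ⊥ := by
    obtain ⟨n, hn⟩ := IsSolvable.solvable F S
    have h1 : d = sInf {k | derivedSeriesOfIdeal F M k S = ⊥} := by
      rw [hd, derivedLength_eq_derivedLengthOfIdeal]
      rfl
    rw [h1]
    have hne : {k | derivedSeriesOfIdeal F M k S = ⊥}.Nonempty :=
      ⟨n, (LieIdeal.derivedSeries_eq_bot_iff (I := S) n).mp hn⟩
    exact Nat.sInf_mem hne
  have hsU : solvI (UIdeal D S 0 1) :=
    solvI_UIdeal D S d 0 1 (by simpa using hbot) (by simpa using hch)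
  have hle : UIdeal D S 0 1 ≤ radical F M := by
    rw [← LieIdeal.solvable_iff_le_radical]
    obtain ⟨n, hn⟩ := hsU
    exact IsSolvable.mk (R := F) ((LieIdeal.derivedSeries_eq_bot_iff (I := UIdeal D S 0 1) n).mpr hn)
  intro x hx
  have hx0 : x ∈ derivedSeriesOfIdeal F M 0 S := by simpa using hx
  have hmem : (D.toLinearMap ^ 1) x ∈ Usub D S 0 1 := pow_mem_Usub D S le_rfl hx0
  rw [pow_one] at hmem
  exact hle hmem

end PetravchukProof

/-- For `y : L` and an ideal `I`, the adjoint action of `y` restricted to `I` is a derivation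
of `I`. -/
def adDer {F : Type*} [Field F] {L : Type*} [LieRing L] [LieAlgebra F L]
    (I : LieIdeal F L) (y : L) : LieDerivation F I I where
  toFun a := ⟨⁅y, (a : L)⁆, I.lie_mem a.2⟩
  map_add' a b := by
    ext
    simp [lie_add]
  map_smul' t a := by
    ext
    simp [lie_smul]
  leibniz' a b := by
    ext
    show ⁅y, ((⁅a, b⁆ : I) : L)⁆ = (((⁅a, (⟨⁅y, (b : L)⁆, I.lie_mem b.2⟩ : I)⁆ : I)
      - (⁅b, (⟨⁅y, (a : L)⁆, I.lie_mem a.2⟩ : I)⁆ : I) : I) : L)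
    have h1 : ((⁅a, b⁆ : I) : L) = ⁅(a : L), (b : L)⁆ := rfl
    have h2 : (((⁅a, (⟨⁅y, (b : L)⁆, I.lie_mem b.2⟩ : I)⁆ : I)
        - (⁅b, (⟨⁅y, (a : L)⁆, I.lie_mem a.2⟩ : I)⁆ : I) : I) : L)
        = ⁅(a : L), ⁅y, (b : L)⁆⁆ - ⁅(b : L), ⁅y, (a : L)⁆⁆ := rfl
    rw [h1, h2, leibniz_lie]
    have h3 : ⁅⁅y, (a : L)⁆, (b : L)⁆ = -⁅(b : L), ⁅y, (a : L)⁆⁆ := (lie_skew _ _).symm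
    rw [h3]
    abel

/-- If `I` is a solregular ideal of `L` then `R(I) ⊆ R(L)`. -/
theorem stmt_2 (F : Type*) [Field F] (L : Type*) [LieRing L] [LieAlgebra F L]
    [FiniteDimensional F L] (I : LieIdeal F L) (h : Solregular F I) :
    ∀ x : I, x ∈ LieAlgebra.radical F I → (x : L) ∈ LieAlgebra.radical F L := by
  haveI : FiniteDimensional F I :=
    inferInstanceAs (FiniteDimensional F (I : Submodule F L))
  set R₀ : LieIdeal F I := LieAlgebra.radical F I with hR₀
  have key : ∀ (y : L), ∀ s ∈ R₀, (⟨⁅y, (s : L)⁆, I.lie_mem s.2⟩ : I) ∈ R₀ := by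
    intro y s hs
    have hch : ringChar F = 0 ∨
        2 ^ LieAlgebra.derivedLength F (LieAlgebra.radical F I) < ringChar F := h
    exact derivation_maps_radical_to_self (adDer I y) hch s hs
  -- the image of `R₀` in `L` is a Lie ideal of `L`
  set J : LieIdeal F L :=
    { Submodule.map (I : Submodule F L).subtype (R₀ : Submodule F I) with
      lie_mem := by
        rintro y m hm
        obtain ⟨s, hs, rfl⟩ := hm
        exact ⟨⟨⁅y, (s : L)⁆, I.lie_mem s.2⟩, key y s hs, rfl⟩ } with hJ
  have hmemJ : ∀ s : I, s ∈ R₀ → (s : L) ∈ J := fun s hs => ⟨s, hs, rfl⟩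
  -- `J` is solvable, being the image of the solvable `R₀`
  haveI hsolvR : LieAlgebra.IsSolvable R₀ := inferInstance
  let f : R₀ →ₗ⁅F⁆ J :=
    { toFun := fun s => ⟨((s : I) : L), hmemJ s s.2⟩
      map_add' := fun a b => by ext; rfl
      map_smul' := fun t a => by ext; rfl
      map_lie' := fun {a b} => by ext; rfl }
  have hfsurj : Function.Surjective f := by
    rintro ⟨x, s, hs, rfl⟩
    exact ⟨⟨s, hs⟩, rfl⟩
  haveI hsolvJ : LieAlgebra.IsSolvable J := hfsurj.lieAlgebra_isSolvable
  have hle : J ≤ LieAlgebra.radical F L :=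
    (LieAlgebra.LieIdeal.solvable_iff_le_radical F L J).mp hsolvJ
  intro x hx
  exact hle (hmemJ x hx)

end Paper
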